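/- For all positive integers m and N, the sum over i from 1 to N of (-1)^(m(i-1)) / (L_{m(i-1)} * L_{m(i+1)}) equals (1/(5 * F_{2m})) * (L_{m(N+1)+1}/L_{m(N+1)} + L_{mN+1}/L_{mN} - L_{m+1}/L_m - 1/2). -/

import Mathlib

def lucas : ℕ → ℕ
  | 0 => 2
  | 1 => 1
  | n + 2 => lucas (n + 1) + lucas n

lemma lucas_pos : ∀ n, 0 < lucas n
  | 0 => by simp [lucas]
  | 1 => by simp [lucas]
  | n + 2 => by rw [lucas]; exact Nat.add_pos_left (lucas_pos (n + 1)) _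

lemma L1 : ∀ d, 2 * (lucas (d + 1) : ℤ) - lucas d = 5 * Nat.fib d
  | 0 => by simp [lucas]
  | 1 => by simp [lucas]
  | d + 2 => by
    have h1 := L1 d
    have h2 := L1 (d + 1)
    simp only [lucas, Nat.fib_add_two]
    push_cast
    push_cast [lucas] at h1 h2 ⊢
    linarith

lemma L2 : ∀ b, ∀ d, (lucas (b + d + 1) : ℤ) * lucas b - lucas (b + 1) * lucas (b + d)
    = (-1) ^ b * 5 * Nat.fib d
  | 0, d => by
    have := L1 d
    simp only [lucas, Nat.zero_add, pow_zero]
    push_cast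
    linarith
  | b + 1, d => by
    have h := L2 b d
    have e1 : b + 1 + d + 1 = (b + d) + 2 := by ring
    have e2 : b + 1 + d = (b + d) + 1 := by ring
    rw [e1, e2, show b + 1 + 1 = b + 2 from rfl]
    simp only [lucas]
    push_cast
    ring_nf
    ring_nf at h
    linarith

lemma lucas_ne (n : ℕ) : (lucas n : ℚ) ≠ 0 := by
  exact_mod_cast (lucas_pos n).ne'

lemma key (b k : ℕ) (hk : 0 < k) :
    ((-1 : ℚ) ^ b / ((lucas b : ℚ) * (lucas (b + k) : ℚ)))
    = (1 / (5 * (Nat.fib k : ℚ))) *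
        ((lucas (b + k + 1) : ℚ) / (lucas (b + k) : ℚ)
          - (lucas (b + 1) : ℚ) / (lucas b : ℚ)) := by
  have hb := lucas_ne b
  have hbk := lucas_ne (b + k)
  have hf : (Nat.fib k : ℚ) ≠ 0 := by
    exact_mod_cast (Nat.fib_pos.mpr hk).ne'
  have h := L2 b k
  have hq : (lucas (b + k + 1) : ℚ) * lucas b - lucas (b + 1) * lucas (b + k)
      = (-1) ^ b * 5 * Nat.fib k := by exact_mod_cast h
  field_simp
  linear_combination (-1 : ℚ) * hq

theorem stmt_4 (m N : ℕ) (hm : 0 < m) (hN : 0 < N) :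
    ∑ i ∈ Finset.Icc 1 N,
      ((-1 : ℚ) ^ (m * (i - 1)) /
        ((lucas (m * (i - 1)) : ℚ) * (lucas (m * (i + 1)) : ℚ)))
    = (1 / (5 * (Nat.fib (2 * m) : ℚ))) *
        ((lucas (m * (N + 1) + 1) : ℚ) / (lucas (m * (N + 1)) : ℚ)
          + (lucas (m * N + 1) : ℚ) / (lucas (m * N) : ℚ)
          - (lucas (m + 1) : ℚ) / (lucas m : ℚ) - 1 / 2) := by
  induction N, hN using Nat.le_induction with
  | base =>
    rw [show Finset.Icc 1 1 = {1} from rfl, Finset.sum_singleton]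
    have h := key 0 (2 * m) (by omega)
    simp only [Nat.zero_add] at h
    have e0 : m * (1 - 1) = 0 := by simp
    have e2 : m * (1 + 1) = 2 * m := by ring
    rw [e0, e2, h]
    simp only [lucas, Nat.cast_ofNat, Nat.cast_one, mul_one]
    ring
  | succ n hn ih =>
    rw [Finset.sum_Icc_succ_top (by omega : 1 ≤ n + 1), ih]
    have h := key (m * n) (2 * m) (by omega)
    have e1 : m * (n + 1 - 1) = m * n := by simp
    have e2 : m * (n + 1 + 1) = m * n + 2 * m := by ring
    rw [e1, e2, h]
    ring
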